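/- Let u, B, ρ be smooth fields on ℝ × ℝ³ with ρ > 0 everywhere. Assume Faraday's equation in the form ∂B/∂t − ∇×(u×B) + u(∇·B) = 0 and the mass continuity equation ∂ρ/∂t + ∇·(ρu) = 0. Then the vector field b = B/ρ is Lie dragged with the flow: ∂b/∂t + (u·∇)b − (b·∇)u = 0 (i.e. ∂b/∂t + [u, b] = 0, where [·,·] is the Lie bracket of vector fields). -/

import Mathlib

noncomputable section

/-- Vectors in ℝ³. -/
abbrev Vec3 : Type := Fin 3 → ℝ

/-- Points of space-time: `(t, x)` with `t : ℝ`, `x : Fin 3 → ℝ`. -/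
abbrev Pt : Type := ℝ × Vec3

/-- Euclidean dot product on ℝ³. -/
def dot3 (a b : Vec3) : ℝ := ∑ i, a i * b i

/-- Cross product on ℝ³. -/
def cross3 (a b : Vec3) : Vec3 :=
  ![a 1 * b 2 - a 2 * b 1, a 2 * b 0 - a 0 * b 2, a 0 * b 1 - a 1 * b 0]

/-- Spatial partial derivative ∂f/∂xᵢ of a scalar field. -/
def pd (i : Fin 3) (f : Pt → ℝ) (p : Pt) : ℝ :=
  fderiv ℝ (fun x => f (p.1, x)) p.2 (Pi.single i 1)

/-- Time derivative ∂f/∂t of a scalar field. -/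
def dt (f : Pt → ℝ) (p : Pt) : ℝ := deriv (fun s => f (s, p.2)) p.1

/-- Time derivative of a vector field, componentwise. -/
def dtVec (F : Pt → Vec3) (p : Pt) : Vec3 := fun i => dt (fun q => F q i) p

/-- Spatial gradient ∇f of a scalar field. -/
def grad3 (f : Pt → ℝ) (p : Pt) : Vec3 := fun i => pd i f p

/-- Spatial divergence ∇·F of a vector field. -/
def div3 (F : Pt → Vec3) (p : Pt) : ℝ := ∑ i, pd i (fun q => F q i) p

/-- Spatial curl ∇×F of a vector field. -/
def curl3 (F : Pt → Vec3) (p : Pt) : Vec3 :=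
  ![pd 1 (fun q => F q 2) p - pd 2 (fun q => F q 1) p,
    pd 2 (fun q => F q 0) p - pd 0 (fun q => F q 2) p,
    pd 0 (fun q => F q 1) p - pd 1 (fun q => F q 0) p]

/-- Directional derivative (u·∇)f of a scalar field. -/
def dirD (u : Pt → Vec3) (f : Pt → ℝ) (p : Pt) : ℝ := ∑ i, u p i * pd i f p

/-- Directional derivative (u·∇)F of a vector field. -/
def dirDVec (u F : Pt → Vec3) (p : Pt) : Vec3 :=
  fun j => ∑ i, u p i * pd i (fun q => F q j) p

/-- (∇u)ᵀ·A, the vector with i-th component ∑ⱼ (∂uʲ/∂xⁱ) Aⱼ. -/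
def gradTdot (u A : Pt → Vec3) (p : Pt) : Vec3 :=
  fun i => ∑ j, pd i (fun q => u q j) p * A p j

/-- A field is smooth when it is C^∞ jointly in time and space. -/
def SmoothS (f : Pt → ℝ) : Prop := ContDiff ℝ (⊤ : ℕ∞) f

/-- A vector field is smooth when it is C^∞ jointly in time and space. -/
def SmoothV (F : Pt → Vec3) : Prop := ContDiff ℝ (⊤ : ℕ∞) F


lemma SmoothS.diffSpace {f : Pt → ℝ} (hf : SmoothS f) (p : Pt) :
    DifferentiableAt ℝ (fun x : Vec3 => f (p.1, x)) p.2 :=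
  ((hf.differentiable (by simp)).comp
    ((differentiable_const _).prodMk differentiable_id)).differentiableAt

lemma SmoothS.diffTime {f : Pt → ℝ} (hf : SmoothS f) (p : Pt) :
    DifferentiableAt ℝ (fun t : ℝ => f (t, p.2)) p.1 :=
  ((hf.differentiable (by simp)).comp
    (differentiable_id.prodMk (differentiable_const _))).differentiableAt

lemma pd_mul {f g : Pt → ℝ} (hf : SmoothS f) (hg : SmoothS g) (i : Fin 3) (p : Pt) :
    pd i (fun q => f q * g q) p = pd i f p * g p + f p * pd i g p := by
  unfold pd
  rw [fderiv_fun_mul (hf.diffSpace p) (hg.diffSpace p)]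
  simp only [ContinuousLinearMap.add_apply, ContinuousLinearMap.smul_apply, smul_eq_mul,
    Prod.mk.eta]
  ring

lemma pd_sub {f g : Pt → ℝ} (hf : SmoothS f) (hg : SmoothS g) (i : Fin 3) (p : Pt) :
    pd i (fun q => f q - g q) p = pd i f p - pd i g p := by
  unfold pd
  rw [fderiv_fun_sub (hf.diffSpace p) (hg.diffSpace p)]
  simp

lemma pd_inv {f : Pt → ℝ} (hf : SmoothS f) (hne : ∀ p, f p ≠ 0) (i : Fin 3) (p : Pt) :
    pd i (fun q => (f q)⁻¹) p = -((f p)^2)⁻¹ * pd i f p := by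
  unfold pd
  have : (fun x : Vec3 => (f (p.1, x))⁻¹) = (fun y : ℝ => y⁻¹) ∘ (fun x : Vec3 => f (p.1, x)) := rfl
  rw [this, fderiv_comp _ (differentiableAt_inv _) (hf.diffSpace p), fderiv_inv]
  · simp only [ContinuousLinearMap.comp_apply, ContinuousLinearMap.smulRight_apply,
      ContinuousLinearMap.one_apply, ContinuousLinearMap.toSpanSingleton_apply, smul_eq_mul,
      Prod.mk.eta]
    ring
  · exact hne p

lemma dt_mul {f g : Pt → ℝ} (hf : SmoothS f) (hg : SmoothS g) (p : Pt) :
    dt (fun q => f q * g q) p = dt f p * g p + f p * dt g p := by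
  unfold dt
  rw [deriv_fun_mul (hf.diffTime p) (hg.diffTime p)]

lemma dt_inv {f : Pt → ℝ} (hf : SmoothS f) (hne : ∀ p, f p ≠ 0) (p : Pt) :
    dt (fun q => (f q)⁻¹) p = -((f p)^2)⁻¹ * dt f p := by
  unfold dt
  rw [deriv_fun_inv'' (hf.diffTime p) (hne p)]
  simp only [Prod.mk.eta]
  ring

/-- Faraday's equation (with the u(∇·B) term) and mass
    continuity imply that b = B/ρ is Lie dragged with the flow. -/
theorem b_field_lie_dragged
    (u B : Pt → Vec3) (ρ : Pt → ℝ)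
    (hu : SmoothV u) (hB : SmoothV B) (hρ : SmoothS ρ)
    (hρpos : ∀ p : Pt, 0 < ρ p)
    (hfar : ∀ p : Pt,
      dtVec B p - curl3 (fun q => cross3 (u q) (B q)) p
        + div3 B p • u p = 0)
    (hcont : ∀ p : Pt, dt ρ p + div3 (fun q => ρ q • u q) p = 0) :
    ∀ p : Pt,
      dtVec (fun q => (ρ q)⁻¹ • B q) p
        + dirDVec u (fun q => (ρ q)⁻¹ • B q) p
        - dirDVec (fun q => (ρ q)⁻¹ • B q) u p = 0 := by
  intro p
  have hρne : ∀ q, ρ q ≠ 0 := fun q => (hρpos q).ne'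
  have hu' : ∀ j, SmoothS (fun q => u q j) := fun j => (contDiff_pi.mp hu) j
  have hB' : ∀ j, SmoothS (fun q => B q j) := fun j => (contDiff_pi.mp hB) j
  have hinv : SmoothS (fun q => (ρ q)⁻¹) := hρ.inv hρne
  have hdtb : ∀ j, dt (fun q => (ρ q)⁻¹ * B q j) p
      = -((ρ p)^2)⁻¹ * dt ρ p * B p j + (ρ p)⁻¹ * dt (fun q => B q j) p := by
    intro j
    rw [dt_mul hinv (hB' j) p, dt_inv hρ hρne p]
  have hpdb : ∀ (i j : Fin 3), pd i (fun q => (ρ q)⁻¹ * B q j) p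
      = -((ρ p)^2)⁻¹ * pd i ρ p * B p j + (ρ p)⁻¹ * pd i (fun q => B q j) p := by
    intro i j
    rw [pd_mul hinv (hB' j) i p, pd_inv hρ hρne i p]
  have hpd_cross : ∀ (i a b c d : Fin 3),
      pd i (fun q => u q a * B q b - u q c * B q d) p
        = (pd i (fun q => u q a) p * B p b + u p a * pd i (fun q => B q b) p)
          - (pd i (fun q => u q c) p * B p d + u p c * pd i (fun q => B q d) p) := by
    intro i a b c d
    rw [pd_sub ((hu' a).mul (hB' b)) ((hu' c).mul (hB' d)),
      pd_mul (hu' a) (hB' b), pd_mul (hu' c) (hB' d)]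
  have hpdru : ∀ (i j : Fin 3), pd i (fun q => ρ q * u q j) p
      = pd i ρ p * u p j + ρ p * pd i (fun q => u q j) p := fun i j => pd_mul hρ (hu' j) i p
  have hc := hcont p
  simp only [div3, Pi.smul_apply, smul_eq_mul, Fin.sum_univ_three, hpdru] at hc
  have hf0 := congrFun (hfar p) 0
  have hf1 := congrFun (hfar p) 1
  have hf2 := congrFun (hfar p) 2
  simp only [Pi.add_apply, Pi.sub_apply, Pi.smul_apply, smul_eq_mul, Pi.zero_apply, dtVec,
    div3, curl3, cross3, Matrix.cons_val_zero, Matrix.cons_val_one, Matrix.head_cons,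
    Matrix.cons_val_two, Matrix.tail_cons, Fin.sum_univ_three, hpd_cross] at hf0 hf1 hf2
  have hr : ρ p ≠ 0 := hρne p
  have hFar : ∀ j : Fin 3,
      dt (fun q => B q j) p
        + (u p 0 * pd 0 (fun q => B q j) p + u p 1 * pd 1 (fun q => B q j) p
            + u p 2 * pd 2 (fun q => B q j) p)
        - (B p 0 * pd 0 (fun q => u q j) p + B p 1 * pd 1 (fun q => u q j) p
            + B p 2 * pd 2 (fun q => u q j) p)
        + B p j * (pd 0 (fun q => u q 0) p + pd 1 (fun q => u q 1) p
            + pd 2 (fun q => u q 2) p) = 0 := by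
    intro j
    have hj : j = 0 ∨ j = 1 ∨ j = 2 := by omega
    rcases hj with rfl | rfl | rfl
    · linear_combination hf0
    · linear_combination hf1
    · linear_combination hf2
  funext j
  have hv2 : ((ρ p)^2)⁻¹ = (ρ p)⁻¹ * (ρ p)⁻¹ := by rw [sq, mul_inv]
  simp only [Pi.add_apply, Pi.sub_apply, Pi.zero_apply, dtVec, dirDVec, Pi.smul_apply,
    smul_eq_mul, Fin.sum_univ_three, hdtb, hpdb, hv2]
  have hv : (ρ p)⁻¹ * ρ p = 1 := inv_mul_cancel₀ hr
  linear_combination (ρ p)⁻¹ * hFar j - (ρ p)⁻¹ * (ρ p)⁻¹ * B p j * hc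
    + ((ρ p)⁻¹ * B p j * (pd 0 (fun q => u q 0) p + pd 1 (fun q => u q 1) p
        + pd 2 (fun q => u q 2) p)) * hv
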